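/- The E-Voronoi region of a light source need not be connected: there exists a finite set F of points in ℝ² and a source f ∈ F such that E-VR(f, F) = {x ∈ ℝ² : f is the closest embracing site for x} is disconnected. -/

import Mathlib

abbrev Pt := EuclideanSpace ℝ (Fin 2)

/-- `f` is the closest embracing site for `x` with respect to `F`. -/
def IsClosestEmbracingSite (F : Finset Pt) (x f : Pt) : Prop :=
  f ∈ F ∧
    x ∈ interior (convexHull ℝ {g : Pt | g ∈ F ∧ dist x g ≤ dist x f}) ∧
    ∀ f' ∈ F, dist x f' < dist x f →
      x ∉ interior (convexHull ℝ {g : Pt | g ∈ F ∧ dist x g ≤ dist x f'})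

/-- The E-Voronoi region of `f` with respect to `F`. -/
def EVR (f : Pt) (F : Finset Pt) : Set Pt := {x : Pt | IsClosestEmbracingSite F x f}

/- ### Auxiliary machinery -/

/-- Build a point of the plane from two coordinates. -/
def mk2 (a b : ℝ) : Pt := WithLp.toLp 2 (fun i : Fin 2 => if i = 0 then a else b)

@[simp] lemma mk2_zero (a b : ℝ) : mk2 a b 0 = a := rfl
@[simp] lemma mk2_one (a b : ℝ) : mk2 a b 1 = b := rfl

lemma dist_mk2 (x : Pt) (a b : ℝ) :
    dist x (mk2 a b) = Real.sqrt ((x 0 - a) ^ 2 + (x 1 - b) ^ 2) := by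
  rw [EuclideanSpace.dist_eq]
  simp [Fin.sum_univ_two, Real.dist_eq, sq_abs]

lemma dist_mk2_le {x : Pt} {a b c d : ℝ}
    (h : (x 0 - a) ^ 2 + (x 1 - b) ^ 2 ≤ (x 0 - c) ^ 2 + (x 1 - d) ^ 2) :
    dist x (mk2 a b) ≤ dist x (mk2 c d) := by
  rw [dist_mk2, dist_mk2]; exact Real.sqrt_le_sqrt h

lemma dist_mk2_lt {x : Pt} {a b c d : ℝ}
    (h : (x 0 - a) ^ 2 + (x 1 - b) ^ 2 < (x 0 - c) ^ 2 + (x 1 - d) ^ 2) :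
    dist x (mk2 a b) < dist x (mk2 c d) := by
  rw [dist_mk2, dist_mk2]; exact Real.sqrt_lt_sqrt (by positivity) h

lemma lin2 (a b : ℝ) : IsLinearMap ℝ (fun y : Pt => a * y 0 + b * y 1) := by
  constructor
  · intro x y; simp [PiLp.add_apply]; ring
  · intro c x; simp [PiLp.smul_apply, smul_eq_mul]; ring

lemma cont_coord (a b c : ℝ) : Continuous (fun y : Pt => a * y 0 + b * y 1 + c) := by
  have h0 : Continuous (fun y : Pt => y 0) := (EuclideanSpace.proj (0 : Fin 2)).continuous
  have h1 : Continuous (fun y : Pt => y 1) := (EuclideanSpace.proj (1 : Fin 2)).continuous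
  continuity

/-- Halfplane separation: if every point of `S` lies (weakly) on one side of a line
and `x` lies (weakly) on the other side, then `x` is not in the interior of the
convex hull of `S`. -/
lemma not_interior_of_halfplane {a b c : ℝ} (hab : a ≠ 0 ∨ b ≠ 0) {S : Set Pt}
    (hS : ∀ g ∈ S, c ≤ a * g 0 + b * g 1) {x : Pt} (hx : a * x 0 + b * x 1 ≤ c) :
    x ∉ interior (convexHull ℝ S) := by
  intro hmem
  have hsub : convexHull ℝ S ⊆ {y : Pt | c ≤ a * y 0 + b * y 1} :=
    convexHull_min hS (convex_halfSpace_ge (lin2 a b) c)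
  have hx' := interior_mono hsub hmem
  rw [mem_interior_iff_mem_nhds, Metric.mem_nhds_iff] at hx'
  obtain ⟨ε, hε, hball⟩ := hx'
  set v : Pt := mk2 a b with hv
  have hvnorm : 0 < ‖v‖ := by
    rw [norm_pos_iff]
    intro h
    have h0 : v 0 = 0 := by rw [h]; rfl
    have h1 : v 1 = 0 := by rw [h]; rfl
    simp [hv] at h0 h1
    rcases hab with h' | h' <;> tauto
  set δ : ℝ := ε / (2 * ‖v‖) with hδ
  have hδpos : 0 < δ := by positivity
  have hy : x - δ • v ∈ Metric.ball x ε := by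
    rw [Metric.mem_ball, dist_eq_norm]
    have : x - δ • v - x = -(δ • v) := by abel
    rw [this, norm_neg, norm_smul, Real.norm_eq_abs, abs_of_pos hδpos, hδ]
    rw [div_mul_eq_mul_div, mul_comm]
    rw [div_lt_iff₀ (by positivity)]
    nlinarith [hvnorm, hε]
  have hineq := hball hy
  simp only [Set.mem_setOf_eq, PiLp.sub_apply, PiLp.smul_apply, smul_eq_mul] at hineq
  simp only [hv, mk2_zero, mk2_one] at hineq
  have habs : 0 < a * a + b * b := by
    rcases hab with h' | h' <;>
      nlinarith [mul_self_pos.mpr h', mul_self_nonneg a, mul_self_nonneg b]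
  nlinarith [hineq, hx, hδpos]

lemma mem_hull3 {P Q R y : Pt} {w1 w2 w3 : ℝ} (h1 : 0 ≤ w1) (h2 : 0 ≤ w2) (h3 : 0 ≤ w3)
    (hsum : w1 + w2 + w3 = 1) (hy : y = w1 • P + w2 • Q + w3 • R) :
    y ∈ convexHull ℝ ({P, Q, R} : Set Pt) := by
  have hmem : ∀ i : Fin 3, (![P, Q, R] : Fin 3 → Pt) i ∈ convexHull ℝ ({P, Q, R} : Set Pt) := by
    intro i
    fin_cases i <;> exact subset_convexHull ℝ _ (by simp)
  have := (convex_convexHull ℝ ({P, Q, R} : Set Pt)).sum_mem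
    (t := (Finset.univ : Finset (Fin 3))) (w := ![w1, w2, w3]) (z := ![P, Q, R])
    (fun i _ => by fin_cases i <;> simpa) (by simp [Fin.sum_univ_three, hsum])
    (fun i _ => hmem i)
  rw [Fin.sum_univ_three] at this
  simpa [hy] using this

/- ### The configuration -/

noncomputable def pA : Pt := mk2 (-2) 0
noncomputable def pB : Pt := mk2 2 0
noncomputable def pC : Pt := mk2 0 (3/2)
noncomputable def pf : Pt := mk2 0 (-1)

noncomputable def Fcfg : Finset Pt :=
  letI := Classical.decEq Pt; {pA, pB, pC, pf}

lemma mem_Fcfg {g : Pt} : g ∈ Fcfg ↔ g = pA ∨ g = pB ∨ g = pC ∨ g = pf := by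
  simp [Fcfg]

lemma left_combo (y : Pt) :
    y = (-(y 0)/2) • pA + ((2 + y 0 + 2 * y 1)/5) • pC + ((6 + 3 * y 0 - 4 * y 1)/10) • pf := by
  ext i
  fin_cases i <;>
    · simp [pA, pC, pf, PiLp.add_apply, PiLp.smul_apply, smul_eq_mul]
      try ring

lemma right_combo (y : Pt) :
    y = ((y 0)/2) • pB + ((2 - y 0 + 2 * y 1)/5) • pC + ((6 - 3 * y 0 - 4 * y 1)/10) • pf := by
  ext i
  fin_cases i <;>
    · simp [pB, pC, pf, PiLp.add_apply, PiLp.smul_apply, smul_eq_mul]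
      try ring

lemma left_interior {y : Pt} (h1 : y 0 < 0) (h2 : 0 < 2 + y 0 + 2 * y 1)
    (h3 : 0 < 6 + 3 * y 0 - 4 * y 1) :
    y ∈ interior (convexHull ℝ ({pA, pC, pf} : Set Pt)) := by
  have hUopen : IsOpen {z : Pt | z 0 < 0 ∧ 0 < 2 + z 0 + 2 * z 1 ∧ 0 < 6 + 3 * z 0 - 4 * z 1} := by
    refine IsOpen.inter ?_ (IsOpen.inter ?_ ?_)
    · show IsOpen {z : Pt | z 0 < 0}
      refine isOpen_lt ?_ ?_ <;> fun_prop
    · show IsOpen {z : Pt | 0 < 2 + z 0 + 2 * z 1}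
      refine isOpen_lt ?_ ?_ <;> fun_prop
    · show IsOpen {z : Pt | 0 < 6 + 3 * z 0 - 4 * z 1}
      refine isOpen_lt ?_ ?_ <;> fun_prop
  refine interior_maximal ?_ hUopen ⟨h1, h2, h3⟩
  rintro z ⟨g1, g2, g3⟩
  exact mem_hull3 (by linarith) (by linarith) (by linarith) (by ring) (left_combo z)

lemma right_interior {y : Pt} (h1 : 0 < y 0) (h2 : 0 < 2 - y 0 + 2 * y 1)
    (h3 : 0 < 6 - 3 * y 0 - 4 * y 1) :
    y ∈ interior (convexHull ℝ ({pB, pC, pf} : Set Pt)) := by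
  have hUopen : IsOpen {z : Pt | 0 < z 0 ∧ 0 < 2 - z 0 + 2 * z 1 ∧ 0 < 6 - 3 * z 0 - 4 * z 1} := by
    refine IsOpen.inter ?_ (IsOpen.inter ?_ ?_)
    · show IsOpen {z : Pt | 0 < z 0}
      refine isOpen_lt ?_ ?_ <;> fun_prop
    · show IsOpen {z : Pt | 0 < 2 - z 0 + 2 * z 1}
      refine isOpen_lt ?_ ?_ <;> fun_prop
    · show IsOpen {z : Pt | 0 < 6 - 3 * z 0 - 4 * z 1}
      refine isOpen_lt ?_ ?_ <;> fun_prop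
  refine interior_maximal ?_ hUopen ⟨h1, h2, h3⟩
  rintro z ⟨g1, g2, g3⟩
  exact mem_hull3 (by linarith) (by linarith) (by linarith) (by ring) (right_combo z)

/- ### The two witnesses -/

noncomputable def pP : Pt := mk2 (-1) (1/2)
noncomputable def pQ : Pt := mk2 1 (1/2)

lemma hp_mem : pP ∈ EVR pf Fcfg := by
  refine ⟨mem_Fcfg.mpr (by tauto), ?_, ?_⟩
  · -- pP is in the interior of the hull of the sites within dist pP pf
    have hsub : ({pA, pC, pf} : Set Pt) ⊆ {g : Pt | g ∈ Fcfg ∧ dist pP g ≤ dist pP pf} := by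
      rintro g (rfl | rfl | rfl)
      · exact ⟨mem_Fcfg.mpr (by tauto), by
          unfold pP pA pf; exact dist_mk2_le (by norm_num)⟩
      · exact ⟨mem_Fcfg.mpr (by tauto), by
          unfold pP pC pf; exact dist_mk2_le (by norm_num)⟩
      · exact ⟨mem_Fcfg.mpr (by tauto), le_refl _⟩
    refine interior_mono (convexHull_mono hsub) ?_
    exact left_interior (by norm_num [pP]) (by norm_num [pP]) (by norm_num [pP])
  · -- minimality
    intro f' _hf' hlt
    have hfB : dist pP pf < dist pP pB := by
      unfold pP pf pB; exact dist_mk2_lt (by norm_num)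
    refine not_interior_of_halfplane (a := -3) (b := 4) (c := 6) (Or.inl (by norm_num)) ?_
      (x := pP) (by norm_num [pP])
    rintro g ⟨hgF, hgd⟩
    rcases mem_Fcfg.mp hgF with rfl | rfl | rfl | rfl
    · norm_num [pA]
    · exact absurd (hgd.trans_lt hlt) (by exact fun h => absurd (h.trans hfB) (lt_irrefl _))
    · norm_num [pC]
    · exact absurd (hgd.trans_lt hlt) (lt_irrefl _)

lemma hq_mem : pQ ∈ EVR pf Fcfg := by
  refine ⟨mem_Fcfg.mpr (by tauto), ?_, ?_⟩
  · have hsub : ({pB, pC, pf} : Set Pt) ⊆ {g : Pt | g ∈ Fcfg ∧ dist pQ g ≤ dist pQ pf} := by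
      rintro g (rfl | rfl | rfl)
      · exact ⟨mem_Fcfg.mpr (by tauto), by
          unfold pQ pB pf; exact dist_mk2_le (by norm_num)⟩
      · exact ⟨mem_Fcfg.mpr (by tauto), by
          unfold pQ pC pf; exact dist_mk2_le (by norm_num)⟩
      · exact ⟨mem_Fcfg.mpr (by tauto), le_refl _⟩
    refine interior_mono (convexHull_mono hsub) ?_
    exact right_interior (by norm_num [pQ]) (by norm_num [pQ]) (by norm_num [pQ])
  · intro f' _hf' hlt
    have hfA : dist pQ pf < dist pQ pA := by
      unfold pQ pf pA; exact dist_mk2_lt (by norm_num)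
    refine not_interior_of_halfplane (a := 3) (b := 4) (c := 6) (Or.inl (by norm_num)) ?_
      (x := pQ) (by norm_num [pQ])
    rintro g ⟨hgF, hgd⟩
    rcases mem_Fcfg.mp hgF with rfl | rfl | rfl | rfl
    · exact absurd (hgd.trans_lt hlt) (by exact fun h => absurd (h.trans hfA) (lt_irrefl _))
    · norm_num [pB]
    · norm_num [pC]
    · exact absurd (hgd.trans_lt hlt) (lt_irrefl _)

/- ### No point on the `y`-axis is in `EVR pf Fcfg` -/

lemma axis_not_mem {x : Pt} (h0 : x 0 = 0) : x ∉ EVR pf Fcfg := by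
  rintro ⟨-, hint, -⟩
  by_cases hc : dist x pA ≤ dist x pf
  · -- then x 1 ≥ 3/2 and all of Fcfg is weakly below the line 3a - 4b = -6 through A and C,
    -- while x is weakly above it
    have hsq : (x 0 - (-2)) ^ 2 + (x 1 - 0) ^ 2 ≤ (x 0 - 0) ^ 2 + (x 1 - (-1)) ^ 2 := by
      have h1 := Real.mul_self_sqrt (by positivity : (0:ℝ) ≤ (x 0 - (-2)) ^ 2 + (x 1 - 0) ^ 2)
      have h2 := Real.mul_self_sqrt (by positivity : (0:ℝ) ≤ (x 0 - 0) ^ 2 + (x 1 - (-1)) ^ 2)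
      have h3 := mul_self_le_mul_self dist_nonneg hc
      rw [show pA = mk2 (-2) 0 from rfl, show pf = mk2 0 (-1) from rfl] at h3
      rw [dist_mk2, dist_mk2] at h3
      nlinarith [h1, h2, h3]
    have ht : (3:ℝ)/2 ≤ x 1 := by nlinarith [hsq, h0]
    refine not_interior_of_halfplane (a := 3) (b := -4) (c := -6) (Or.inl (by norm_num)) ?_
      (x := x) (by rw [h0]; linarith) hint
    rintro g ⟨hgF, -⟩
    rcases mem_Fcfg.mp hgF with rfl | rfl | rfl | rfl <;> norm_num [pA, pB, pC, pf]
  · -- then neither A nor B is within dist x pf, so the relevant sites lie on the y-axis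
    push_neg at hc
    have hAB : dist x pA = dist x pB := by
      rw [show pA = mk2 (-2) 0 from rfl, show pB = mk2 2 0 from rfl, dist_mk2, dist_mk2, h0]
      norm_num
    refine not_interior_of_halfplane (a := 1) (b := 0) (c := 0) (Or.inl (by norm_num)) ?_
      (x := x) (by rw [h0]; norm_num) hint
    rintro g ⟨hgF, hgd⟩
    rcases mem_Fcfg.mp hgF with rfl | rfl | rfl | rfl
    · exact absurd (hgd.trans_lt hc) (lt_irrefl _)
    · rw [← hAB] at hgd; exact absurd (hgd.trans_lt hc) (lt_irrefl _)
    · norm_num [pC]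
    · norm_num [pf]

/- ### Main theorem -/

theorem exists_disconnected_EVR :
    ∃ (F : Finset Pt) (f : Pt), f ∈ F ∧ (EVR f F).Nonempty ∧
      ¬ IsPreconnected (EVR f F) := by
  refine ⟨Fcfg, pf, mem_Fcfg.mpr (by tauto), ⟨pP, hp_mem⟩, ?_⟩
  intro hpre
  have hUopen : IsOpen {z : Pt | z 0 < 0} := by
    exact isOpen_lt (by fun_prop) (by fun_prop)
  have hVopen : IsOpen {z : Pt | 0 < z 0} := by
    exact isOpen_lt (by fun_prop) (by fun_prop)
  have hcover : EVR pf Fcfg ⊆ {z : Pt | z 0 < 0} ∪ {z : Pt | 0 < z 0} := by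
    intro x hx
    rcases lt_trichotomy (x 0) 0 with h | h | h
    · exact Or.inl h
    · exact absurd hx (axis_not_mem h)
    · exact Or.inr h
  obtain ⟨z, -, hz1, hz2⟩ := hpre {z : Pt | z 0 < 0} {z : Pt | 0 < z 0} hUopen hVopen hcover
    ⟨pP, hp_mem, by norm_num [pP]⟩ ⟨pQ, hq_mem, by norm_num [pQ]⟩
  simp only [Set.mem_setOf_eq] at hz1 hz2
  linarith
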